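/- arXiv:1903.05380 — 4 statements merged into one kernel-verified Lean document; each statement's English description precedes it below -/
import Mathlib

section
/- Let Λ be a countably infinite set and let G be a closed subgroup of Sym(Λ). Then G has the small index property if and only if for every λ ∈ Λ the stabilizer G_λ = {g ∈ G : g(λ) = λ}, with the subspace topology, has the small index property. -/
/-- The topology of pointwise convergence on the permutation group of a discrete set. -/
instance permPointwiseTopology (Λ : Type*) : TopologicalSpace (Equiv.Perm Λ) :=
  TopologicalSpace.induced (fun σ : Equiv.Perm Λ => (σ : Λ → Λ))
    (@Pi.topologicalSpace Λ (fun _ => Λ) (fun _ => ⊥))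

/-- The small index property: every subgroup of index `< 2^ℵ₀` is open. -/
def SmallIndexProperty (G : Type*) [Group G] [TopologicalSpace G] : Prop :=
  ∀ H : Subgroup G, Cardinal.mk (G ⧸ H) < Cardinal.continuum → IsOpen (H : Set G)

/-- The stabilizer of a point in `Sym(Λ)`. -/
def permPtStab (Λ : Type*) (l : Λ) : Subgroup (Equiv.Perm Λ) where
  carrier := {σ | σ l = l}
  one_mem' := rfl
  mul_mem' := by
    intro a b ha hb
    show a (b l) = l
    rw [show b l = l from hb]; exact ha
  inv_mem' := by
    intro a ha
    show a⁻¹ l = l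
    exact Equiv.Perm.inv_eq_iff_eq.mpr (show l = a l from (ha : a l = l).symm)

/-- The stabilizer of a point in a subgroup `G ≤ Sym(Λ)`. -/
def permStab {Λ : Type*} (G : Subgroup (Equiv.Perm Λ)) (l : Λ) : Subgroup ↥G :=
  (permPtStab Λ l).comap G.subtype

lemma agree_open {Λ : Type*} (s : Finset Λ) (h : Equiv.Perm Λ) :
    IsOpen {σ : Equiv.Perm Λ | ∀ i ∈ s, σ i = h i} := by
  letI : TopologicalSpace Λ := ⊥
  haveI : DiscreteTopology Λ := ⟨rfl⟩
  have : {σ : Equiv.Perm Λ | ∀ i ∈ s, σ i = h i}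
      = (fun σ : Equiv.Perm Λ => (σ : Λ → Λ)) ⁻¹' ((s : Set Λ).pi (fun i => {h i})) := by
    ext σ; simp [Set.mem_pi]
  rw [this]
  exact ⟨_, isOpen_set_pi s.finite_toSet (fun i _ => trivial), rfl⟩

lemma open_id_mem {Λ : Type*} (V : Set (Equiv.Perm Λ)) (hV : IsOpen V)
    (h1 : (1 : Equiv.Perm Λ) ∈ V) :
    ∃ s : Finset Λ, ∀ τ : Equiv.Perm Λ, (∀ i ∈ s, τ i = i) → τ ∈ V := by
  letI : TopologicalSpace Λ := ⊥
  haveI : DiscreteTopology Λ := ⟨rfl⟩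
  obtain ⟨W, hW, rfl⟩ := isOpen_induced_iff.mp hV
  obtain ⟨I, u, hu, hsub⟩ := isOpen_pi_iff.mp hW _ h1
  refine ⟨I, fun τ hτ => hsub fun i hi => ?_⟩
  have := (hu i hi).2
  simpa [hτ i hi] using this

/-- A closed subgroup of `Sym(Λ)` has the small index property if and only if all its
point stabilizers do. -/
theorem smallIndexProperty_iff_stabilizers {Λ : Type*} [Countable Λ] [Infinite Λ]
    (G : Subgroup (Equiv.Perm Λ)) (hGclosed : IsClosed (G : Set (Equiv.Perm Λ))) :
    SmallIndexProperty ↥G ↔ ∀ l : Λ, SmallIndexProperty ↥(permStab G l) := by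
  classical
  constructor
  · intro hG l H hH
    have hK : True := trivial
    let K := permStab G l
    let H' : Subgroup ↥G := H.map K.subtype
    have hH' : H' = H.map K.subtype := rfl
    have hle : H' ≤ K := Subgroup.map_subtype_le H
    have hcomap : H'.subgroupOf K = H := by
      rw [hH', Subgroup.subgroupOf, Subgroup.comap_map_eq_self_of_injective K.subtype_injective]
    -- index of stabilizer in G is countable
    have horb : Cardinal.mk (↥G ⧸ K) ≤ Cardinal.aleph0 := by
      have hinj : Function.Injective
          (fun q : ↥G ⧸ K => Quotient.liftOn' q (fun g => (g : Equiv.Perm Λ) l)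
            (by
              intro a b hab
              have : a⁻¹ * b ∈ K := QuotientGroup.leftRel_apply.mp hab
              have hfix : ((a : Equiv.Perm Λ)⁻¹ * (b : Equiv.Perm Λ)) l = l := this
              have := congrArg (a : Equiv.Perm Λ) hfix
              simpa using this.symm)) := by
        intro q₁ q₂ h
        induction q₁ using Quotient.inductionOn'
        induction q₂ using Quotient.inductionOn'
        rename_i a b
        simp only [Quotient.liftOn'_mk''] at h
        apply Quotient.sound'
        rw [QuotientGroup.leftRel_apply]
        show ((a⁻¹ * b : ↥G) : Equiv.Perm Λ) l = l
        simp [h.symm]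
      calc Cardinal.mk (↥G ⧸ K) ≤ Cardinal.mk Λ := Cardinal.mk_le_of_injective hinj
        _ ≤ Cardinal.aleph0 := Cardinal.mk_le_aleph0
    have hcard : Cardinal.mk (↥G ⧸ H') < Cardinal.continuum := by
      have he := Subgroup.quotientEquivProdOfLE hle
      rw [Cardinal.eq.mpr ⟨he⟩, Cardinal.mk_prod, Cardinal.lift_id, Cardinal.lift_id]
      apply Cardinal.mul_lt_of_lt Cardinal.aleph0_le_continuum
      · exact lt_of_le_of_lt horb Cardinal.aleph0_lt_continuum
      · rw [hcomap]; exact hH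
    have hopen := hG H' hcard
    have : (H : Set ↥K) = (Subtype.val : ↥K → ↥G) ⁻¹' (H' : Set ↥G) := by
      ext x
      simp only [Set.mem_preimage, SetLike.mem_coe, hH', Subgroup.mem_map]
      constructor
      · intro hx; exact ⟨x, hx, rfl⟩
      · rintro ⟨y, hy, hyx⟩
        have : y = x := Subtype.ext hyx
        rwa [this] at hy
    rw [this]
    exact hopen.preimage continuous_subtype_val
  · intro hstab H hH
    obtain ⟨l⟩ := (inferInstance : Nonempty Λ)
    let K := permStab G l
    -- index of H ∩ K in K is small
    have hcard : Cardinal.mk (↥K ⧸ H.subgroupOf K) < Cardinal.continuum := by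
      refine lt_of_le_of_lt (Cardinal.mk_le_of_injective (f := fun q =>
        Quotient.map' (Subtype.val : ↥K → ↥G)
          (by
            intro a b hab
            rw [QuotientGroup.leftRel_apply] at hab ⊢
            exact hab) q) ?_) hH
      intro q₁ q₂ h
      induction q₁ using Quotient.inductionOn'
      induction q₂ using Quotient.inductionOn'
      rename_i a b
      simp only [Quotient.map'_mk''] at h
      apply Quotient.sound'
      rw [QuotientGroup.leftRel_apply]
      have := QuotientGroup.leftRel_apply.mp (Quotient.exact' h)
      exact this
    have hopenK := hstab l _ hcard
    -- extract a finite support condition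
    obtain ⟨U, hU, hUeq⟩ := isOpen_induced_iff.mp hopenK
    obtain ⟨V, hV, hVeq⟩ := isOpen_induced_iff.mp hU
    have h1V : (1 : Equiv.Perm Λ) ∈ V := by
      have h1 : (1 : ↥K) ∈ (H.subgroupOf K : Set ↥K) := (H.subgroupOf K).one_mem
      rw [← hUeq] at h1
      rw [← hVeq] at h1
      exact h1
    obtain ⟨s, hs⟩ := open_id_mem V hV h1V
    -- key: any g ∈ G fixing l and s pointwise lies in H
    have key : ∀ g : ↥G, (g : Equiv.Perm Λ) l = l → (∀ i ∈ s, (g : Equiv.Perm Λ) i = i) →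
        g ∈ H := by
      intro g hgl hgs
      have hgK : g ∈ K := hgl
      have hgV : (g : Equiv.Perm Λ) ∈ V := hs _ hgs
      have hgU : g ∈ U := by rw [← hVeq]; exact hgV
      have : (⟨g, hgK⟩ : ↥K) ∈ (H.subgroupOf K : Set ↥K) := by
        rw [← hUeq]; exact hgU
      exact this
    -- H is open
    set T : Set (Equiv.Perm Λ) :=
      ⋃ h ∈ H, {σ : Equiv.Perm Λ | ∀ i ∈ insert l s, σ i = ((h : ↥G) : Equiv.Perm Λ) i} with hT
    have hTopen : IsOpen T := isOpen_biUnion fun h _ => agree_open _ _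
    have hHeq : (H : Set ↥G) = (Subtype.val : ↥G → Equiv.Perm Λ) ⁻¹' T := by
      ext g
      simp only [Set.mem_preimage, hT, Set.mem_iUnion, SetLike.mem_coe, Set.mem_setOf_eq]
      constructor
      · intro hg; exact ⟨g, hg, fun i _ => rfl⟩
      · rintro ⟨h, hh, hagree⟩
        have hl : ((h⁻¹ * g : ↥G) : Equiv.Perm Λ) l = l := by
          have := hagree l (Finset.mem_insert_self l s)
          simp [this]
        have hsfix : ∀ i ∈ s, ((h⁻¹ * g : ↥G) : Equiv.Perm Λ) i = i := by
          intro i hi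
          have := hagree i (Finset.mem_insert_of_mem hi)
          simp [this]
        have := key _ hl hsfix
        have : h * (h⁻¹ * g) ∈ H := H.mul_mem hh this
        simpa using this
    rw [hHeq]
    exact hTopen.preimage continuous_subtype_val
end

section
/- Let G be a Polish group admitting a comeager conjugacy class. If N is a normal subgroup of G whose index (the cardinality of the coset space G/N) is strictly less than 2^{ℵ₀}, then N = G. -/
open Metric Set Filter

section Mycielski

variable {X : Type*} [MetricSpace X]

/-- Refinement lemma: finitely many nonempty open sets can be shrunk so that all products of
distinct pairs land in a given dense open set. -/
lemma myc_refine_aux {ι : Type*} [Fintype ι] (V : ι → Set X)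
    (hVo : ∀ i, IsOpen (V i)) (hVn : ∀ i, (V i).Nonempty)
    {D : Set (X × X)} (hDo : IsOpen D) (hDd : Dense D) :
    ∃ W : ι → Set X, (∀ i, IsOpen (W i)) ∧ (∀ i, (W i).Nonempty) ∧ (∀ i, W i ⊆ V i) ∧
      ∀ i j, i ≠ j → W i ×ˢ W j ⊆ D := by
  classical
  suffices H : ∀ P : Finset (ι × ι), ∃ W : ι → Set X,
      (∀ i, IsOpen (W i)) ∧ (∀ i, (W i).Nonempty) ∧ (∀ i, W i ⊆ V i) ∧
      ∀ p ∈ P, p.1 ≠ p.2 → W p.1 ×ˢ W p.2 ⊆ D by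
    obtain ⟨W, h1, h2, h3, h4⟩ := H Finset.univ
    exact ⟨W, h1, h2, h3, fun i j hij => h4 (i, j) (Finset.mem_univ _) hij⟩
  intro P
  induction P using Finset.induction_on with
  | empty => exact ⟨V, hVo, hVn, fun i => subset_rfl, by simp⟩
  | @insert p P hpP ih =>
    obtain ⟨W, Wo, Wn, WV, Wp⟩ := ih
    by_cases hij : p.1 = p.2
    · refine ⟨W, Wo, Wn, WV, fun q hq hq12 => ?_⟩
      rcases Finset.mem_insert.1 hq with rfl | hq'
      · exact absurd hij hq12
      · exact Wp q hq' hq12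
    · have hne : ((W p.1 ×ˢ W p.2) ∩ D).Nonempty :=
        hDd.inter_open_nonempty _ ((Wo p.1).prod (Wo p.2))
          ((Wn p.1).prod (Wn p.2))
      obtain ⟨z, hz⟩ := hne
      have hzopen : IsOpen ((W p.1 ×ˢ W p.2) ∩ D) := ((Wo p.1).prod (Wo p.2)).inter hDo
      obtain ⟨u, v, hu, hv, hzu, hzv, huv⟩ :=
        isOpen_prod_iff.1 hzopen z.1 z.2 (by simpa using hz)
      have huW : u ⊆ W p.1 := fun a ha =>
        ((huv (Set.mk_mem_prod ha hzv)).1 : _ ∈ W p.1 ×ˢ W p.2).1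
      have hvW : v ⊆ W p.2 := fun b hb =>
        ((huv (Set.mk_mem_prod hzu hb)).1 : _ ∈ W p.1 ×ˢ W p.2).2
      refine ⟨fun k => W k ∩ ((if k = p.1 then u else univ) ∩ (if k = p.2 then v else univ)),
        ?_, ?_, ?_, ?_⟩
      · intro k
        refine (Wo k).inter (IsOpen.inter ?_ ?_) <;> split <;> simp [hu, hv, isOpen_univ]
      · intro k
        by_cases h1 : k = p.1
        · subst h1
          refine ⟨z.1, hz.1.1, ?_⟩
          simp [if_pos rfl, if_neg hij, hzu]
        · by_cases h2 : k = p.2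
          · subst h2
            refine ⟨z.2, hz.1.2, ?_⟩
            simp [if_neg h1, hzv]
          · obtain ⟨a, ha⟩ := Wn k
            exact ⟨a, ha, by simp [if_neg h1, if_neg h2]⟩
      · intro k
        exact (inter_subset_left).trans (WV k)
      · intro q hq hq12
        rcases Finset.mem_insert.1 hq with rfl | hq'
        · have hsub1 : W q.1 ∩ ((if q.1 = q.1 then u else univ) ∩
              (if q.1 = q.2 then v else univ)) ⊆ u := by
            simp [if_pos, if_neg hij]
          have hsub2 : W q.2 ∩ ((if q.2 = q.1 then u else univ) ∩
              (if q.2 = q.2 then v else univ)) ⊆ v := by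
            simp [if_neg (Ne.symm hij)]
          exact (Set.prod_mono hsub1 hsub2).trans (fun w hw => (huv hw).2)
        · exact (Set.prod_mono inter_subset_left inter_subset_left).trans (Wp q hq' hq12)

/-- Step existence for the Cantor scheme. -/
lemma myc_step_exists {E : Set (X × X)} (hEo : IsOpen E) (hEd : Dense E) {n : ℕ}
    (p : (Fin n → Bool) → X × ℝ) (hp : ∀ s, 0 < (p s).2) :
    ∃ q : (Fin (n + 1) → Bool) → X × ℝ,
      (∀ s, 0 < (q s).2) ∧ (∀ s, (q s).2 ≤ (1 / 2) ^ (n + 1)) ∧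
      (∀ s, closedBall (q s).1 (q s).2 ⊆ ball (p (Fin.init s)).1 (p (Fin.init s)).2) ∧
      (∀ s t, s ≠ t → ball (q s).1 (q s).2 ×ˢ ball (q t).1 (q t).2 ⊆ E) := by
  obtain ⟨W, Wo, Wn, WV, Wp⟩ := myc_refine_aux
    (fun s : Fin (n + 1) → Bool => ball (p (Fin.init s)).1 (p (Fin.init s)).2)
    (fun s => isOpen_ball) (fun s => ⟨_, mem_ball_self (hp _)⟩) hEo hEd
  have key : ∀ s : Fin (n + 1) → Bool, ∃ c : X, ∃ r : ℝ, 0 < r ∧ r ≤ (1 / 2) ^ (n + 1) ∧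
      closedBall c r ⊆ W s := by
    intro s
    obtain ⟨x, hx⟩ := Wn s
    obtain ⟨δ, hδ, hball⟩ := Metric.isOpen_iff.1 (Wo s) x hx
    refine ⟨x, min (δ / 2) ((1 / 2) ^ (n + 1)), ?_, min_le_right _ _, ?_⟩
    · exact lt_min (by linarith) (by positivity)
    · exact (closedBall_subset_ball (lt_of_le_of_lt (min_le_left _ _) (by linarith))).trans hball
  choose c r hr0 hrle hcb using key
  refine ⟨fun s => (c s, r s), hr0, hrle, fun s => (hcb s).trans (WV s), fun s t hst => ?_⟩
  exact (Set.prod_mono ((ball_subset_closedBall).trans (hcb s))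
    ((ball_subset_closedBall).trans (hcb t))).trans (Wp s t hst)

/-- A Cantor scheme of balls adapted to a sequence of dense open subsets of `X × X`. -/
noncomputable def mycChain (E : ℕ → Set (X × X)) (hEo : ∀ n, IsOpen (E n))
    (hEd : ∀ n, Dense (E n)) (x0 : X) :
    ∀ n : ℕ, { p : (Fin n → Bool) → X × ℝ // ∀ s, 0 < (p s).2 }
  | 0 => ⟨fun _ => (x0, 1), fun _ => one_pos⟩
  | (n + 1) =>
    ⟨(myc_step_exists (hEo n) (hEd n) (mycChain E hEo hEd x0 n).1
        (mycChain E hEo hEd x0 n).2).choose,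
     (myc_step_exists (hEo n) (hEd n) (mycChain E hEo hEd x0 n).1
        (mycChain E hEo hEd x0 n).2).choose_spec.1⟩

lemma mycChain_succ_spec (E : ℕ → Set (X × X)) (hEo : ∀ n, IsOpen (E n))
    (hEd : ∀ n, Dense (E n)) (x0 : X) (n : ℕ) :
    (∀ s, ((mycChain E hEo hEd x0 (n + 1)).1 s).2 ≤ (1 / 2) ^ (n + 1)) ∧
    (∀ s, closedBall ((mycChain E hEo hEd x0 (n + 1)).1 s).1
        ((mycChain E hEo hEd x0 (n + 1)).1 s).2 ⊆
        ball ((mycChain E hEo hEd x0 n).1 (Fin.init s)).1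
        ((mycChain E hEo hEd x0 n).1 (Fin.init s)).2) ∧
    (∀ s t, s ≠ t →
      ball ((mycChain E hEo hEd x0 (n + 1)).1 s).1 ((mycChain E hEo hEd x0 (n + 1)).1 s).2 ×ˢ
      ball ((mycChain E hEo hEd x0 (n + 1)).1 t).1 ((mycChain E hEo hEd x0 (n + 1)).1 t).2 ⊆
      E n) := by
  have h := (myc_step_exists (hEo n) (hEd n) (mycChain E hEo hEd x0 n).1
      (mycChain E hEo hEd x0 n).2).choose_spec
  exact ⟨h.2.1, h.2.2.1, h.2.2.2⟩

/-- Mycielski-type theorem: for a comeager relation `R` on a nonempty complete metric space,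
there is a map from Cantor space whose pairs of distinct points all land in `R`. -/
theorem mycielski_pairwise [CompleteSpace X] [Nonempty X] {R : Set (X × X)}
    (hR : R ∈ residual (X × X)) :
    ∃ f : (ℕ → Bool) → X, ∀ s t : ℕ → Bool, s ≠ t → (f s, f t) ∈ R := by
  obtain ⟨D, hDo, hDd, hDR⟩ : ∃ D : ℕ → Set (X × X),
      (∀ n, IsOpen (D n)) ∧ (∀ n, Dense (D n)) ∧ (⋂ n, D n) ⊆ R := by
    obtain ⟨S₀, hSo, hSd, hSc, hSs⟩ := mem_residual_iff.1 hR
    obtain ⟨D, hD⟩ := (hSc.insert univ).exists_eq_range (insert_nonempty _ _)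
    have hmem : ∀ n, D n ∈ insert univ S₀ := fun n => hD ▸ mem_range_self n
    refine ⟨D, fun n => ?_, fun n => ?_, fun x hx => hSs fun t ht => ?_⟩
    · rcases hmem n with h | h
      · rw [h]; exact isOpen_univ
      · exact hSo _ h
    · rcases hmem n with h | h
      · rw [h]; exact dense_univ
      · exact hSd _ h
    · have : t ∈ range D := hD ▸ mem_insert_of_mem _ ht
      obtain ⟨n, rfl⟩ := this
      exact mem_iInter.1 hx n
  set E : ℕ → Set (X × X) := fun n => ⋂ m ∈ Finset.range (n + 1), D m with hE
  have hEo : ∀ n, IsOpen (E n) := fun n => isOpen_biInter_finset (fun m _ => hDo m)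
  have hEd : ∀ n, Dense (E n) := by
    intro n
    induction n with
    | zero => simpa [hE] using hDd 0
    | succ n ih =>
      have he : E (n + 1) = D (n + 1) ∩ E n := by
        simp only [hE, Finset.range_add_one, Finset.set_biInter_insert]
      rw [he]
      exact (hDd (n + 1)).inter_of_isOpen_left ih (hDo (n + 1))
  have hED : ∀ m n, m ≤ n → E n ⊆ D m := by
    intro m n h x hx
    simp only [hE, mem_iInter] at hx
    exact hx m (Finset.mem_range.2 (by omega))
  obtain ⟨x0⟩ := ‹Nonempty X›
  set c : ∀ n, (Fin n → Bool) → X := fun n s => ((mycChain E hEo hEd x0 n).1 s).1 with hc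
  set r : ∀ n, (Fin n → Bool) → ℝ := fun n s => ((mycChain E hEo hEd x0 n).1 s).2 with hr
  have hrpos : ∀ n s, 0 < r n s := fun n s => (mycChain E hEo hEd x0 n).2 s
  have spec := fun n => mycChain_succ_spec E hEo hEd x0 n
  have hrle : ∀ n s, r n s ≤ (1 / 2) ^ n := by
    intro n s
    cases n with
    | zero => simp [hr, mycChain]
    | succ n => exact (spec n).1 s
  have hcb : ∀ n (s : Fin (n + 1) → Bool),
      closedBall (c (n + 1) s) (r (n + 1) s) ⊆ ball (c n (Fin.init s)) (r n (Fin.init s)) :=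
    fun n => (spec n).2.1
  have hpair : ∀ n (s t : Fin (n + 1) → Bool), s ≠ t →
      ball (c (n + 1) s) (r (n + 1) s) ×ˢ ball (c (n + 1) t) (r (n + 1) t) ⊆ E n :=
    fun n => (spec n).2.2
  set str : (ℕ → Bool) → ∀ n, Fin n → Bool := fun x n i => x i with hstrdef
  have hinit : ∀ x n, Fin.init (str x (n + 1)) = str x n := by
    intro x n; funext i; simp [Fin.init, hstrdef]
  have hnest : ∀ (x : ℕ → Bool) n,
      closedBall (c (n + 1) (str x (n + 1))) (r (n + 1) (str x (n + 1))) ⊆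
      closedBall (c n (str x n)) (r n (str x n)) := by
    intro x n
    refine (hcb n (str x (n + 1))).trans ?_
    rw [hinit]
    exact ball_subset_closedBall
  have hmono : ∀ (x : ℕ → Bool) m k, m ≤ k →
      closedBall (c k (str x k)) (r k (str x k)) ⊆
      closedBall (c m (str x m)) (r m (str x m)) := by
    intro x m k h
    induction k, h using Nat.le_induction with
    | base => exact subset_rfl
    | succ k hk ih => exact (hnest x k).trans ih
  have hcau : ∀ x : ℕ → Bool, CauchySeq (fun n => c n (str x n)) := by
    intro x
    apply cauchySeq_of_le_geometric (1 / 2) 1 (by norm_num)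
    intro n
    have h1 : c (n + 1) (str x (n + 1)) ∈
        closedBall (c (n + 1) (str x (n + 1))) (r (n + 1) (str x (n + 1))) :=
      mem_closedBall_self (hrpos _ _).le
    have h2 := hcb n (str x (n + 1)) h1
    rw [hinit] at h2
    have h3 := mem_ball.1 h2
    have hd : dist (c n (str x n)) (c (n + 1) (str x (n + 1))) ≤ (1 / 2) ^ n := by
      rw [dist_comm]; exact h3.le.trans (hrle n _)
    simpa using hd
  have hlim : ∀ x : ℕ → Bool, ∃ p, Tendsto (fun n => c n (str x n)) atTop (nhds p) :=
    fun x => cauchySeq_tendsto_of_complete (hcau x)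
  choose f hf using hlim
  have hmem : ∀ x n, f x ∈ ball (c n (str x n)) (r n (str x n)) := by
    intro x n
    have h2 : f x ∈ closedBall (c (n + 1) (str x (n + 1))) (r (n + 1) (str x (n + 1))) := by
      apply Metric.isClosed_closedBall.mem_of_tendsto (hf x)
      refine eventually_atTop.2 ⟨n + 1, fun k hk => ?_⟩
      exact hmono x (n + 1) k hk (mem_closedBall_self (hrpos _ _).le)
    have h3 := hcb n (str x (n + 1)) h2
    rwa [hinit] at h3
  refine ⟨f, fun s t hst => ?_⟩
  obtain ⟨k, hk⟩ := Function.ne_iff.1 hst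
  apply hDR
  rw [mem_iInter]
  intro m
  have hstr : str s (max m k + 1) ≠ str t (max m k + 1) := by
    intro h
    apply hk
    have h' := congrFun h ⟨k, by omega⟩
    simpa [hstrdef] using h'
  have hin := hpair (max m k) _ _ hstr
    (Set.mk_mem_prod (hmem s (max m k + 1)) (hmem t (max m k + 1)))
  exact hED m (max m k) (le_max_left _ _) hin

end Mycielski

/-- Preimages of residual sets under continuous open maps are residual. -/
lemma residual_preimage_of_isOpenMap {X Y : Type*} [TopologicalSpace X] [TopologicalSpace Y]
    {f : X → Y} (hc : Continuous f) (ho : IsOpenMap f) {s : Set Y}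
    (hs : s ∈ residual Y) : f ⁻¹' s ∈ residual X := by
  rw [mem_residual_iff] at hs ⊢
  obtain ⟨S, So, Sd, Sc, Ss⟩ := hs
  refine ⟨(f ⁻¹' ·) '' S, ?_, ?_, Sc.image _, ?_⟩
  · rintro _ ⟨t, ht, rfl⟩
    exact (So t ht).preimage hc
  · rintro _ ⟨t, ht, rfl⟩
    exact (Sd t ht).preimage ho
  · intro x hx
    refine Ss fun t ht => ?_
    exact hx (f ⁻¹' t) ⟨t, ht, rfl⟩

/-- In a Polish group with a comeager conjugacy class, every normal subgroup of index
strictly less than the continuum is the whole group. -/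
theorem normal_subgroup_smallIndex_eq_top {G : Type*} [Group G] [TopologicalSpace G]
    [IsTopologicalGroup G] [PolishSpace G]
    (hG : ∃ g : G, {k : G | ∃ h : G, h * g * h⁻¹ = k} ∈ residual G)
    (N : Subgroup G) (hN : N.Normal)
    (hidx : Cardinal.mk (G ⧸ N) < Cardinal.continuum) :
    N = ⊤ := by
  obtain ⟨g, hg⟩ := hG
  letI := TopologicalSpace.upgradeIsCompletelyMetrizable G
  haveI : Nonempty G := ⟨1⟩
  have hφc : Continuous fun p : G × G => p.1⁻¹ * p.2 := (continuous_fst.inv).mul continuous_snd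
  have hφo : IsOpenMap fun p : G × G => p.1⁻¹ * p.2 := by
    have heq : (fun p : G × G => p.1⁻¹ * p.2) = Prod.snd ∘
        ⇑(((Homeomorph.inv G).prodCongr (Homeomorph.refl G)).trans
          (Homeomorph.shearMulRight G)) := by
      funext p
      simp [Homeomorph.shearMulRight_coe]
    rw [heq]
    exact isOpenMap_snd.comp (Homeomorph.isOpenMap _)
  have hR : ((fun p : G × G => p.1⁻¹ * p.2) ⁻¹' {k : G | ∃ h : G, h * g * h⁻¹ = k})
      ∈ residual (G × G) := residual_preimage_of_isOpenMap hφc hφo hg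
  obtain ⟨f, hf⟩ := mycielski_pairwise hR
  have hninj : ¬ Function.Injective fun s : ℕ → Bool => (QuotientGroup.mk (f s) : G ⧸ N) := by
    intro hinj
    have h1 := Cardinal.lift_mk_le'.2 ⟨⟨_, hinj⟩⟩
    have h2 : Cardinal.mk (ℕ → Bool) = Cardinal.continuum := by
      rw [← Cardinal.power_def, Cardinal.mk_bool, Cardinal.mk_nat, Cardinal.two_power_aleph0]
    rw [h2, Cardinal.lift_continuum, Cardinal.lift_uzero] at h1
    exact absurd (h1.trans_lt hidx) (lt_irrefl _)
  rw [Function.not_injective_iff] at hninj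
  obtain ⟨s, t, hq, hst⟩ := hninj
  have hmemN : (f s)⁻¹ * f t ∈ N := QuotientGroup.eq.1 hq
  obtain ⟨h, hh⟩ := hf s t hst
  have hgN : g ∈ N := by
    have hc : h * g * h⁻¹ ∈ N := by rw [hh]; exact hmemN
    have h2 := hN.conj_mem _ hc h⁻¹
    have heq : h⁻¹ * (h * g * h⁻¹) * h⁻¹⁻¹ = g := by group
    rwa [heq] at h2
  have hCN : {k : G | ∃ h : G, h * g * h⁻¹ = k} ⊆ (N : Set G) := by
    rintro k ⟨h', rfl⟩
    exact hN.conj_mem g hgN h'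
  have hNres : (N : Set G) ∈ residual G := Filter.mem_of_superset hg hCN
  rw [Subgroup.eq_top_iff']
  intro x
  have hTres : ((fun y : G => x * y) ⁻¹' (N : Set G)) ∈ residual G := by
    refine residual_preimage_of_isOpenMap (continuous_const.mul continuous_id) ?_ hNres
    exact (Homeomorph.mulLeft x).isOpenMap
  have hint : ((N : Set G) ∩ ((fun y : G => x * y) ⁻¹' (N : Set G))) ∈ residual G :=
    Filter.inter_mem hNres hTres
  obtain ⟨u, hu, hGδ, hDense⟩ := mem_residual.1 hint
  obtain ⟨y, hy⟩ := hDense.nonempty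
  obtain ⟨hy1, hy2⟩ := hu hy
  have hxy : x = (x * y) * y⁻¹ := by group
  rw [hxy]
  exact mul_mem hy2 (inv_mem hy1)
end

section
/- Let X be a dendrite with center map c and let Y ⊆ X. Then the set c(Y³) = {c(x,y,z) : x, y, z ∈ Y} is c-closed: for all x₁, x₂, x₃ ∈ c(Y³), c(x₁,x₂,x₃) ∈ c(Y³). -/
open Set

/-- An arc from `x` to `y`: for `x = y` it is the singleton, otherwise the range of an
injective path from `x` to `y`. -/
def IsArc {X : Type*} [TopologicalSpace X] (x y : X) (A : Set X) : Prop :=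
  (x = y ∧ A = {x}) ∨ (x ≠ y ∧ ∃ p : Path x y, Function.Injective p ∧ A = Set.range p)

/-- A dendrite: a nonempty compact connected locally connected metrizable space in which
any two points are joined by a unique arc. -/
class Dendrite (X : Type*) [TopologicalSpace X] : Prop where
  nonempty : Nonempty X
  compactSpace : CompactSpace X
  connectedSpace : ConnectedSpace X
  locallyConnectedSpace : LocallyConnectedSpace X
  metrizableSpace : TopologicalSpace.MetrizableSpace X
  existsUnique_arc : ∀ x y : X, ∃! A : Set X, IsArc x y A

/-- The arc `[x,y]` joining two points of a dendrite. -/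
noncomputable def arc {X : Type*} [TopologicalSpace X] [Dendrite X] (x y : X) : Set X :=
  (Dendrite.existsUnique_arc x y).exists.choose

/-- The open arc `]x,y[`. -/
noncomputable def openArc {X : Type*} [TopologicalSpace X] [Dendrite X] (x y : X) : Set X :=
  arc x y \ {x, y}

/-- The order of a point: the number of connected components of its complement. -/
noncomputable def ptOrder {X : Type*} [TopologicalSpace X] (x : X) : Cardinal :=
  Cardinal.mk (ConnectedComponents (({x}ᶜ : Set X)))

def IsEndPoint {X : Type*} [TopologicalSpace X] (x : X) : Prop := ptOrder x = 1

def IsBranchPoint {X : Type*} [TopologicalSpace X] (x : X) : Prop := 3 ≤ ptOrder x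

/-- The set of branch points of `X`. -/
def Br (X : Type*) [TopologicalSpace X] : Set X := {x | IsBranchPoint x}

/-- `x` has order `n ∈ ℕ∞`, where `⊤` stands for infinite order. -/
def HasOrder {X : Type*} [TopologicalSpace X] (x : X) (n : ℕ∞) : Prop :=
  if n = ⊤ then Cardinal.aleph0 ≤ ptOrder x else ptOrder x = (WithTop.untopD 0 n : ℕ)

/-- A Ważewski dendrite of type `S`: every branch point has its order in `S` and for each
`n ∈ S` the set of points of order `n` is arcwise dense. -/
structure IsWazewskiDendrite (X : Type*) [TopologicalSpace X] [Dendrite X] (S : Set ℕ∞) :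
    Prop where
  order_mem : ∀ x : X, IsBranchPoint x → ∃ n ∈ S, HasOrder x n
  arcwiseDense : ∀ n ∈ S, ∀ x y : X, x ≠ y → ∃ z ∈ openArc x y, HasOrder z n

/-- The group structure on the homeomorphism group of `X`. -/
instance homeoGroup {X : Type*} [TopologicalSpace X] : Group (X ≃ₜ X) where
  mul g h := h.trans g
  one := Homeomorph.refl X
  inv := Homeomorph.symm
  mul_assoc _ _ _ := rfl
  one_mul _ := Homeomorph.ext fun _ => rfl
  mul_one _ := Homeomorph.ext fun _ => rfl
  inv_mul_cancel g := Homeomorph.ext fun x => g.symm_apply_apply x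

/-- The compact-open topology on the homeomorphism group of `X`. -/
instance homeoCompactOpen {X : Type*} [TopologicalSpace X] : TopologicalSpace (X ≃ₜ X) :=
  TopologicalSpace.induced (fun g : X ≃ₜ X => (g : C(X, X))) ContinuousMap.compactOpen


/-- The center map of a dendrite: `centerMap x y z` is the unique point of
`[x,y] ∩ [y,z] ∩ [z,x]`. -/
noncomputable def centerMap {X : Type*} [TopologicalSpace X] [Dendrite X] (x y z : X) : X :=
  haveI : Nonempty X := Dendrite.nonempty
  Classical.epsilon fun w => w ∈ arc x y ∧ w ∈ arc y z ∧ w ∈ arc z x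

/-- The image of `Y³` under the center map. -/
noncomputable def centerImage {X : Type*} [TopologicalSpace X] [Dendrite X]
    (Y : Set X) : Set X :=
  {w | ∃ x ∈ Y, ∃ y ∈ Y, ∃ z ∈ Y, w = centerMap x y z}


namespace DendriteAux

open unitInterval

variable {X : Type*} [TopologicalSpace X] [Dendrite X]

lemma isArc_arc (x y : X) : IsArc x y (arc x y) :=
  (Dendrite.existsUnique_arc x y).exists.choose_spec

lemma arc_unique {x y : X} {A : Set X} (h : IsArc x y A) : arc x y = A :=
  (Dendrite.existsUnique_arc x y).unique (isArc_arc x y) h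

lemma arc_self (x : X) : arc x x = {x} :=
  arc_unique (Or.inl ⟨rfl, rfl⟩)

lemma arc_eq_range {x y : X} (h : x ≠ y) :
    ∃ p : Path x y, Function.Injective p ∧ arc x y = Set.range p := by
  rcases isArc_arc x y with ⟨hxy, _⟩ | ⟨_, p, hp, hr⟩
  · exact absurd hxy h
  · exact ⟨p, hp, hr⟩

lemma left_mem_arc (x y : X) : x ∈ arc x y := by
  rcases isArc_arc x y with ⟨hxy, hA⟩ | ⟨_, p, _, hr⟩
  · rw [hA]; rfl
  · rw [hr]; exact ⟨0, p.source⟩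

lemma right_mem_arc (x y : X) : y ∈ arc x y := by
  rcases isArc_arc x y with ⟨hxy, hA⟩ | ⟨_, p, _, hr⟩
  · rw [hA]; exact hxy ▸ rfl
  · rw [hr]; exact ⟨1, p.target⟩

lemma arc_symm (x y : X) : arc x y = arc y x := by
  rcases isArc_arc x y with ⟨hxy, hA⟩ | ⟨hxy, p, hp, hr⟩
  · subst hxy; rfl
  · refine (arc_unique (Or.inr ⟨hxy.symm, p.symm, ?_, ?_⟩)).symm
    · intro s t hst
      have := hp hst
      simpa using congrArg σ this
    · rw [Path.symm_range, hr]

lemma path_congr {x y : X} (p : Path x y) {a b : I} (h : (a : ℝ) = (b : ℝ)) : p a = p b :=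
  congrArg p (Subtype.ext h)

lemma path_arg_mem {t s : I} : (t : ℝ) * s ∈ I := by
  constructor
  · exact mul_nonneg t.2.1 s.2.1
  · calc (t : ℝ) * s ≤ 1 * 1 := mul_le_mul t.2.2 s.2.2 s.2.1 zero_le_one
      _ = 1 := one_mul 1

/-- Reparametrized initial segment of a path. -/
noncomputable def subPath {x y : X} (p : Path x y) (t : I) : Path x (p t) where
  toFun s := p ⟨(t : ℝ) * s, path_arg_mem⟩
  continuous_toFun := p.continuous.comp (by
    apply Continuous.subtype_mk
    exact (continuous_const.mul continuous_subtype_val))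
  source' := (path_congr p (b := 0) (by simp)).trans p.source
  target' := path_congr p (by simp)

lemma range_subPath {x y : X} (p : Path x y) (t : I) :
    Set.range (subPath p t) = p '' {s : I | s ≤ t} := by
  ext w
  constructor
  · rintro ⟨s, rfl⟩
    refine ⟨⟨(t : ℝ) * s, path_arg_mem⟩, ?_, rfl⟩
    show (t : ℝ) * s ≤ t
    calc (t : ℝ) * s ≤ t * 1 := mul_le_mul_of_nonneg_left s.2.2 t.2.1
      _ = t := mul_one _
  · rintro ⟨s, hs, rfl⟩
    rcases eq_or_ne t 0 with rfl | ht
    · have hs0 : (s : ℝ) = 0 := le_antisymm hs s.2.1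
      exact ⟨0, path_congr p (by simp [hs0])⟩
    · have ht' : (0 : ℝ) < t := lt_of_le_of_ne t.2.1 (by
        intro h; exact ht (by ext; exact h.symm))
      refine ⟨⟨(s : ℝ) / t, div_nonneg s.2.1 t.2.1, ?_⟩, ?_⟩
      · rw [div_le_one ht']
        exact_mod_cast hs
      · exact path_congr p (by field_simp)

lemma subPath_injective {x y : X} {p : Path x y} (hp : Function.Injective p) {t : I}
    (ht : t ≠ 0) : Function.Injective (subPath p t) := by
  intro s₁ s₂ h
  have ht' : (t : ℝ) ≠ 0 := fun h0 => ht (Subtype.ext h0)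
  have := hp h
  have h2 : (t : ℝ) * s₁ = (t : ℝ) * s₂ := congrArg Subtype.val this
  exact Subtype.ext (mul_left_cancel₀ ht' h2)

lemma arc_split_left {x y : X} {p : Path x y} (hp : Function.Injective p) (t : I) :
    arc x (p t) = p '' {s : I | s ≤ t} := by
  rcases eq_or_ne t 0 with rfl | ht
  · rw [show p 0 = x from p.source]
    rw [arc_self]
    ext w
    constructor
    · rintro rfl
      exact ⟨0, show (0:I) ≤ 0 from le_rfl, p.source⟩
    · rintro ⟨s, hs, rfl⟩
      have : s = 0 := le_antisymm hs s.2.1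
      rw [this, p.source]
      rfl
  · have hxt : x ≠ p t := by
      intro h
      have : p 0 = p t := by rw [p.source]; exact h
      exact ht (hp this).symm
    rw [arc_unique (Or.inr ⟨hxt, subPath p t, subPath_injective hp ht, rfl⟩)]
    exact range_subPath p t

lemma symm_image_le {t : I} : σ '' {s : I | s ≤ σ t} = {s : I | t ≤ s} := by
  ext s
  constructor
  · rintro ⟨r, hr, rfl⟩
    show t ≤ σ r
    rw [← symm_symm t]
    exact symm_le_symm.mpr hr
  · intro hs
    exact ⟨σ s, by simpa using symm_le_symm.mpr hs, symm_symm s⟩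

lemma arc_split_right {x y : X} {p : Path x y} (hp : Function.Injective p) (t : I) :
    arc (p t) y = p '' {s : I | t ≤ s} := by
  have hps : p.symm (σ t) = p t := show p (σ (σ t)) = p t from path_congr p (by simp)
  have hsymm_inj : Function.Injective p.symm := by
    intro s₁ s₂ h
    have := hp (show p (σ s₁) = p (σ s₂) from h)
    simpa using congrArg σ this
  calc arc (p t) y = arc y (p t) := arc_symm _ _
    _ = arc y (p.symm (σ t)) := by rw [hps]
    _ = p.symm '' {s : I | s ≤ σ t} := arc_split_left hsymm_inj (σ t)
    _ = p '' (σ '' {s : I | s ≤ σ t}) := by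
        rw [← Set.image_comp]; rfl
    _ = p '' {s : I | t ≤ s} := by rw [symm_image_le]

lemma arc_split {x y m : X} (hm : m ∈ arc x y) :
    arc x y = arc x m ∪ arc m y ∧ arc x m ∩ arc m y = {m} := by
  rcases isArc_arc x y with ⟨rfl, hA⟩ | ⟨hxy, p, hp, hr⟩
  · rw [hA] at hm ⊢
    rcases hm with rfl
    rw [arc_self]
    constructor
    · rw [Set.union_self]
    · rw [Set.inter_self]
  · rw [hr] at hm
    obtain ⟨t, rfl⟩ := hm
    rw [arc_split_left hp t, arc_split_right hp t, hr]
    constructor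
    · rw [← Set.image_union]
      have : {s : I | s ≤ t} ∪ {s : I | t ≤ s} = Set.univ := by
        ext s; simpa using le_total s t
      rw [this, Set.image_univ]
    · rw [← Set.image_inter hp]
      have : {s : I | s ≤ t} ∩ {s : I | t ≤ s} = {t} := by
        ext s
        constructor
        · rintro ⟨h1, h2⟩; exact le_antisymm h1 h2
        · rintro rfl; exact ⟨show s ≤ s from le_rfl, show s ≤ s from le_rfl⟩
      rw [this, Set.image_singleton]

lemma arc_subset_left {x y m : X} (hm : m ∈ arc x y) : arc x m ⊆ arc x y := by
  rw [(arc_split hm).1]; exact Set.subset_union_left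

lemma arc_subset_right {x y m : X} (hm : m ∈ arc x y) : arc m y ⊆ arc x y := by
  rw [(arc_split hm).1]; exact Set.subset_union_right

lemma arc_glue {x y m : X} (h : arc x m ∩ arc m y ⊆ {m}) :
    arc x y = arc x m ∪ arc m y := by
  rcases eq_or_ne x m with rfl | hxm
  · rw [arc_self]
    rw [Set.union_eq_self_of_subset_left (by
      intro w hw; rcases hw with rfl; exact left_mem_arc _ _)]
  · rcases eq_or_ne m y with rfl | hmy
    · rw [arc_self]
      rw [Set.union_eq_self_of_subset_right (by
        intro w hw; rcases hw with rfl; exact right_mem_arc _ _)]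
    · have hxy : x ≠ y := by
        rintro rfl
        exact hxm (h ⟨left_mem_arc x m, right_mem_arc m x⟩)
      obtain ⟨q₁, hq₁, hr₁⟩ := arc_eq_range hxm
      obtain ⟨q₂, hq₂, hr₂⟩ := arc_eq_range hmy
      have hint : ∀ a b : I, q₁ a = q₂ b → q₁ a = m := by
        intro a b hab
        exact h ⟨hr₁ ▸ Set.mem_range_self a, hr₂ ▸ (hab ▸ Set.mem_range_self b)⟩
      have hinj : Function.Injective (q₁.trans q₂) := by
        intro s₁ s₂ heq
        rw [Path.trans_apply, Path.trans_apply] at heq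
        split_ifs at heq with h₁ h₂ h₂
        · have := hq₁ heq
          have : 2 * (s₁ : ℝ) = 2 * (s₂ : ℝ) := congrArg Subtype.val this
          exact Subtype.ext (by linarith)
        · exfalso
          have hm1 : q₁ _ = m := hint _ _ heq
          have hm2 : q₂ _ = m := heq ▸ hm1
          have e1 : (⟨2 * (s₁ : ℝ), _⟩ : I) = 1 := hq₁ (by rw [hm1, q₁.target])
          have e2 : (⟨2 * (s₂ : ℝ) - 1, _⟩ : I) = 0 := hq₂ (by rw [hm2, q₂.source])
          have e1' : 2 * (s₁ : ℝ) = 1 := congrArg Subtype.val e1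
          have e2' : 2 * (s₂ : ℝ) - 1 = 0 := congrArg Subtype.val e2
          have : ¬ ((s₂ : ℝ) ≤ 1/2) := h₂
          linarith
        · exfalso
          have hm2 : q₁ _ = m := hint _ _ heq.symm
          have hm1 : q₂ _ = m := heq.symm ▸ hm2
          have e1 : (⟨2 * (s₂ : ℝ), _⟩ : I) = 1 := hq₁ (by rw [hm2, q₁.target])
          have e2 : (⟨2 * (s₁ : ℝ) - 1, _⟩ : I) = 0 := hq₂ (by rw [hm1, q₂.source])
          have e1' : 2 * (s₂ : ℝ) = 1 := congrArg Subtype.val e1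
          have e2' : 2 * (s₁ : ℝ) - 1 = 0 := congrArg Subtype.val e2
          have : ¬ ((s₁ : ℝ) ≤ 1/2) := h₁
          linarith
        · have := hq₂ heq
          have : 2 * (s₁ : ℝ) - 1 = 2 * (s₂ : ℝ) - 1 := congrArg Subtype.val this
          exact Subtype.ext (by linarith)
      rw [arc_unique (Or.inr ⟨hxy, q₁.trans q₂, hinj, rfl⟩)]
      rw [Path.trans_range, hr₁, hr₂]

lemma mem_arc_glue {x y m : X} (h : arc x m ∩ arc m y ⊆ {m}) : m ∈ arc x y := by
  rw [arc_glue h]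
  exact Or.inl (right_mem_arc x m)

lemma isClosed_arc (x y : X) : IsClosed (arc x y) := by
  haveI : TopologicalSpace.MetrizableSpace X := Dendrite.metrizableSpace
  haveI : T2Space X := TopologicalSpace.t2Space_of_metrizableSpace
  rcases isArc_arc x y with ⟨_, hA⟩ | ⟨_, p, _, hr⟩
  · rw [hA]; exact isClosed_singleton
  · rw [hr]
    exact (isCompact_range p.continuous).isClosed

lemma exists_center (x y z : X) :
    ∃ m : X, m ∈ arc x y ∧ m ∈ arc y z ∧ m ∈ arc z x := by
  rcases eq_or_ne x y with rfl | hxy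
  · exact ⟨x, left_mem_arc _ _, left_mem_arc _ _, right_mem_arc _ _⟩
  · obtain ⟨p, hp, hr⟩ := arc_eq_range hxy
    set T : Set I := {t : I | p t ∈ arc y z} with hT
    have hTclosed : IsClosed T := (isClosed_arc y z).preimage p.continuous
    have hTne : T.Nonempty := ⟨1, by simp only [hT, Set.mem_setOf_eq, p.target]; exact left_mem_arc y z⟩
    have hTcpt : IsCompact T := IsCompact.of_isClosed_subset isCompact_univ hTclosed (Set.subset_univ _)
    obtain ⟨t₀, ht₀T, ht₀min⟩ := hTcpt.exists_isLeast hTne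
    refine ⟨p t₀, hr ▸ Set.mem_range_self t₀, ht₀T, ?_⟩
    rw [arc_symm]
    apply mem_arc_glue
    rintro w ⟨hw1, hw2⟩
    rw [arc_split_left hp t₀] at hw1
    obtain ⟨s, hs, rfl⟩ := hw1
    have : arc (p t₀) z ⊆ arc y z := arc_subset_right ht₀T
    have hsT : s ∈ T := this hw2
    have : t₀ ≤ s := ht₀min hsT
    have : s = t₀ := le_antisymm hs this
    rw [this]
    rfl

lemma center_unique_aux {x y z m m' : X}
    (h2 : m ∈ arc y z)
    (h1' : m' ∈ arc x y) (h2' : m' ∈ arc y z) (h3' : m' ∈ arc z x)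
    (hord : m ∈ arc x m') : m = m' := by
  have hsplit_yz := (arc_split h2').1
  rw [hsplit_yz] at h2
  rcases h2 with h2 | h2
  · -- m ∈ arc y m', and m ∈ arc x m' ; arc x m' ∩ arc m' y = {m'}
    have hi := (arc_split h1').2
    have : m ∈ arc x m' ∩ arc m' y := ⟨hord, by rw [arc_symm]; exact h2⟩
    rw [hi] at this
    exact this
  · -- m ∈ arc m' z and m ∈ arc x m' ; arc x m' ∩ arc m' z = {m'} since m' ∈ arc x z
    have h3'' : m' ∈ arc x z := by rw [arc_symm]; exact h3'
    have hi := (arc_split h3'').2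
    have : m ∈ arc x m' ∩ arc m' z := ⟨hord, h2⟩
    rw [hi] at this
    exact this

lemma mem_arc_pair {x y m m' : X} (hm : m ∈ arc x y) (hm' : m' ∈ arc x y) :
    m ∈ arc x m' ∨ m' ∈ arc x m := by
  rcases eq_or_ne x y with rfl | hxy
  · rw [arc_self] at hm hm'
    rcases hm with rfl; rcases hm' with rfl
    left; exact left_mem_arc _ _
  · obtain ⟨p, hp, hr⟩ := arc_eq_range hxy
    rw [hr] at hm hm'
    obtain ⟨s, rfl⟩ := hm
    obtain ⟨t, rfl⟩ := hm'
    rcases le_total s t with h | h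
    · left; rw [arc_split_left hp t]; exact ⟨s, h, rfl⟩
    · right; rw [arc_split_left hp s]; exact ⟨t, h, rfl⟩

lemma center_unique {x y z m m' : X}
    (h1 : m ∈ arc x y) (h2 : m ∈ arc y z) (h3 : m ∈ arc z x)
    (h1' : m' ∈ arc x y) (h2' : m' ∈ arc y z) (h3' : m' ∈ arc z x) : m = m' := by
  rcases mem_arc_pair h1 h1' with hord | hord
  · exact center_unique_aux h2 h1' h2' h3' hord
  · exact (center_unique_aux h2' h1 h2 h3 hord).symm

lemma centerMap_mem (x y z : X) :
    centerMap x y z ∈ arc x y ∧ centerMap x y z ∈ arc y z ∧ centerMap x y z ∈ arc z x := by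
  haveI : Nonempty X := Dendrite.nonempty
  exact Classical.epsilon_spec (exists_center x y z)

lemma centerMap_eq {x y z w : X} (h1 : w ∈ arc x y) (h2 : w ∈ arc y z) (h3 : w ∈ arc z x) :
    centerMap x y z = w := by
  obtain ⟨c1, c2, c3⟩ := centerMap_mem x y z
  exact center_unique c1 c2 c3 h1 h2 h3

/-- `a` and `b` lie (weakly) on the same side of `m`. -/
def SameSide (m a b : X) : Prop := ∃ p : X, p ≠ m ∧ p ∈ arc m a ∧ p ∈ arc m b

lemma not_sameSide_iff {m a b : X} : ¬ SameSide m a b ↔ m ∈ arc a b := by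
  constructor
  · intro h
    apply mem_arc_glue
    rintro w ⟨hw1, hw2⟩
    by_contra hwm
    exact h ⟨w, hwm, by rw [arc_symm]; exact hw1, hw2⟩
  · rintro hm ⟨p, hpm, hp1, hp2⟩
    have hi := (arc_split hm).2
    have : p ∈ arc a m ∩ arc m b := ⟨by rw [arc_symm]; exact hp1, hp2⟩
    rw [hi] at this
    exact hpm this

lemma SameSide.symm {m a b : X} (h : SameSide m a b) : SameSide m b a := by
  obtain ⟨p, h1, h2, h3⟩ := h
  exact ⟨p, h1, h3, h2⟩

lemma SameSide.trans {m a b c : X} (hab : SameSide m a b) (hbc : SameSide m b c) :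
    SameSide m a c := by
  obtain ⟨p, hpm, hpa, hpb⟩ := hab
  obtain ⟨q, hqm, hqb, hqc⟩ := hbc
  have hsplit := (arc_split hpb).1
  rw [hsplit] at hqb
  rcases hqb with hq | hq
  · -- q ∈ arc m p ⊆ arc m a
    exact ⟨q, hqm, arc_subset_left hpa hq, hqc⟩
  · -- q ∈ arc p b, so p ∈ arc m q ⊆ arc m c
    have hsub : arc p q ⊆ arc p b := arc_subset_left hq
    have hkey : arc m p ∩ arc p q ⊆ {p} := by
      intro w hw
      have : w ∈ arc m p ∩ arc p b := ⟨hw.1, hsub hw.2⟩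
      rw [(arc_split hpb).2] at this
      exact this
    have hpmq : p ∈ arc m q := by
      rw [arc_glue hkey]
      exact Or.inl (right_mem_arc _ _)
    exact ⟨p, hpm, hpa, arc_subset_left hqc hpmq⟩

lemma sameSide_of_mem_arc {m a b x : X} (hx : x ∈ arc a b) (hxm : x ≠ m) :
    SameSide m x a ∨ SameSide m x b := by
  by_contra h
  push_neg at h
  have h1 : m ∈ arc x a := not_sameSide_iff.mp h.1
  have h2 : m ∈ arc x b := not_sameSide_iff.mp h.2
  have : m ∈ arc a x ∩ arc x b := ⟨by rw [arc_symm]; exact h1, h2⟩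
  rw [(arc_split hx).2] at this
  exact hxm this.symm

end DendriteAux

open DendriteAux in
/-- `c(Y³)` is closed under the center map. -/
theorem centerImage_centerClosed {X : Type*} [TopologicalSpace X] [Dendrite X]
    (Y : Set X) :
    ∀ x₁ ∈ centerImage Y, ∀ x₂ ∈ centerImage Y, ∀ x₃ ∈ centerImage Y,
      centerMap x₁ x₂ x₃ ∈ centerImage Y := by
  intro x₁ h₁ x₂ h₂ x₃ h₃
  set m := centerMap x₁ x₂ x₃ with hm
  by_cases e1 : m = x₁
  · rw [e1]; exact h₁
  by_cases e2 : m = x₂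
  · rw [e2]; exact h₂
  by_cases e3 : m = x₃
  · rw [e3]; exact h₃
  obtain ⟨m12, m23, m31⟩ := centerMap_mem x₁ x₂ x₃
  have pick : ∀ x a b c : X, a ∈ Y → b ∈ Y → x = centerMap a b c → x ≠ m →
      ∃ u ∈ Y, SameSide m x u := by
    intro x a b c haY hbY hx hxm
    have hxab : x ∈ arc a b := hx ▸ (centerMap_mem a b c).1
    rcases sameSide_of_mem_arc hxab hxm with h | h
    · exact ⟨a, haY, h⟩
    · exact ⟨b, hbY, h⟩
  obtain ⟨a₁, ha₁, b₁, hb₁, c₁, hc₁, hx₁⟩ := h₁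
  obtain ⟨a₂, ha₂, b₂, hb₂, c₂, hc₂, hx₂⟩ := h₂
  obtain ⟨a₃, ha₃, b₃, hb₃, c₃, hc₃, hx₃⟩ := h₃
  obtain ⟨u₁, hu₁Y, hS₁⟩ := pick x₁ a₁ b₁ c₁ ha₁ hb₁ hx₁ (fun h => e1 h.symm)
  obtain ⟨u₂, hu₂Y, hS₂⟩ := pick x₂ a₂ b₂ c₂ ha₂ hb₂ hx₂ (fun h => e2 h.symm)
  obtain ⟨u₃, hu₃Y, hS₃⟩ := pick x₃ a₃ b₃ c₃ ha₃ hb₃ hx₃ (fun h => e3 h.symm)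
  have n12 : ¬ SameSide m x₁ x₂ := not_sameSide_iff.mpr m12
  have n23 : ¬ SameSide m x₂ x₃ := not_sameSide_iff.mpr m23
  have n31 : ¬ SameSide m x₃ x₁ := not_sameSide_iff.mpr m31
  have g12 : m ∈ arc u₁ u₂ :=
    not_sameSide_iff.mp (fun hS => n12 ((hS₁.trans hS).trans hS₂.symm))
  have g23 : m ∈ arc u₂ u₃ :=
    not_sameSide_iff.mp (fun hS => n23 ((hS₂.trans hS).trans hS₃.symm))
  have g31 : m ∈ arc u₃ u₁ :=
    not_sameSide_iff.mp (fun hS => n31 ((hS₃.trans hS).trans hS₁.symm))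
  exact ⟨u₁, hu₁Y, u₂, hu₂Y, u₃, hu₃Y, (centerMap_eq g12 g23 g31).symm⟩
end

section
/- Let X be a dendrite, g a homeomorphism of X, and n ≥ 1 a natural number. Then D(g) ⊆ D(gⁿ) and K(gⁿ) ⊆ K(g). -/
open Set

/-- The fixed-point set of a homeomorphism. -/
def fixedSet {X : Type*} [TopologicalSpace X] (g : X ≃ₜ X) : Set X := {x | g x = x}

/-- The arc `[x,y]` is austro-boreal for `g`: `x ≠ y`, both ends are fixed and no point
of `]x,y[` is fixed. -/
def IsAustroBoreal {X : Type*} [TopologicalSpace X] [Dendrite X] (g : X ≃ₜ X)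
    (x y : X) : Prop :=
  x ≠ y ∧ g x = x ∧ g y = y ∧ ∀ z ∈ openArc x y, g z ≠ z

/-- `Dcomp x y` is the connected component of `X \ {x,y}` containing `]x,y[`. -/
noncomputable def Dcomp {X : Type*} [TopologicalSpace X] [Dendrite X] (x y : X) : Set X :=
  ⋃ z ∈ openArc x y, connectedComponentIn ({x, y}ᶜ : Set X) z

/-- `Dset g` is the union of the `Dcomp x y` over all austro-boreal arcs `[x,y]` of `g`. -/
noncomputable def Dset {X : Type*} [TopologicalSpace X] [Dendrite X] (g : X ≃ₜ X) : Set X :=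
  ⋃ (x : X) (y : X) (_ : IsAustroBoreal g x y), Dcomp x y

/-- `Kset g` is the complement of `Dset g`. -/
noncomputable def Kset {X : Type*} [TopologicalSpace X] [Dendrite X] (g : X ≃ₜ X) : Set X :=
  (Dset g)ᶜ

section Aux
variable {X : Type*} [TopologicalSpace X] [Dendrite X]

lemma isArc_arc (x y : X) : IsArc x y (arc x y) :=
  (Dendrite.existsUnique_arc x y).exists.choose_spec

lemma arc_eq_of_isArc {x y : X} {A : Set X} (h : IsArc x y A) : arc x y = A :=
  ((Dendrite.existsUnique_arc x y).unique (isArc_arc x y) h)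

lemma image_arc (g : X ≃ₜ X) (x y : X) : g '' arc x y = arc (g x) (g y) := by
  refine (arc_eq_of_isArc ?_).symm
  rcases isArc_arc x y with ⟨rfl, hA⟩ | ⟨hxy, p, hp, hA⟩
  · exact Or.inl ⟨rfl, by rw [hA, Set.image_singleton]⟩
  · refine Or.inr ⟨g.injective.ne hxy, p.map g.continuous, g.injective.comp hp, ?_⟩
    rw [hA, ← Set.range_comp]
    rfl

lemma homeo_pow_apply (g : X ≃ₜ X) (n : ℕ) (z : X) : (g ^ n) z = g^[n] z := by
  induction n generalizing z with
  | zero => rfl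
  | succ k ih =>
    rw [pow_succ]
    have h1 : (g ^ k * g) z = (g ^ k) (g z) := rfl
    rw [h1, ih, ← Function.iterate_succ_apply]

end Aux

section Core
variable {X : Type*} [TopologicalSpace X] [Dendrite X]

lemma isAustroBoreal_pow {g : X ≃ₜ X} {x y : X} (h : IsAustroBoreal g x y)
    {n : ℕ} (hn : 1 ≤ n) : IsAustroBoreal (g ^ n) x y := by
  obtain ⟨hxy, hgx, hgy, hmove⟩ := h
  haveI : TopologicalSpace.MetrizableSpace X := Dendrite.metrizableSpace
  haveI : T2Space X := inferInstance
  refine ⟨hxy, ?_, ?_, ?_⟩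
  · rw [homeo_pow_apply]; exact Function.iterate_fixed hgx n
  · rw [homeo_pow_apply]; exact Function.iterate_fixed hgy n
  -- the interesting part
  rcases isArc_arc x y with ⟨h', _⟩ | ⟨-, p, hp, hA⟩
  · exact absurd h' hxy
  intro z hz hfix
  -- the arc is invariant under g
  have harc : g '' arc x y = arc x y := by rw [image_arc, hgx, hgy]
  have hgrange : ∀ t : unitInterval, g (p t) ∈ range ⇑p := by
    intro t
    rw [← hA, ← harc]
    exact ⟨p t, by rw [hA]; exact mem_range_self t, rfl⟩
  -- transport g to a self-map of [0,1]
  have hemb := (p.continuous.isClosedEmbedding hp).toIsEmbedding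
  set e : unitInterval ≃ₜ range ⇑p := hemb.toHomeomorph with he
  set f : unitInterval → unitInterval := fun t => e.symm ⟨g (p t), hgrange t⟩ with hf
  have hfp : ∀ t, p (f t) = g (p t) := by
    intro t
    have h1 := e.apply_symm_apply ⟨g (p t), hgrange t⟩
    have h2 : (e (f t) : X) = p (f t) := rfl
    rw [hf] at h2 ⊢
    rw [← h2, h1]
  have hfc : Continuous f := by
    apply e.symm.continuous.comp
    exact Continuous.subtype_mk (g.continuous.comp p.continuous) _
  have hp0 : p 0 = x := p.source
  have hp1 : p 1 = y := p.target
  have hf0 : f 0 = 0 := hp (by rw [hfp, hp0, hgx])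
  have hf1 : f 1 = 1 := hp (by rw [hfp, hp1, hgy])
  have hfinj : Function.Injective f := by
    intro a b hab
    apply hp
    have := congrArg (⇑p) hab
    rw [hfp, hfp] at this
    exact g.injective this
  have hmem : ∀ t : unitInterval, t ≠ 0 → t ≠ 1 → p t ∈ openArc x y := by
    intro t ht0 ht1
    refine ⟨by rw [hA]; exact mem_range_self t, ?_⟩
    simp only [mem_insert_iff, mem_singleton_iff]
    push_neg
    exact ⟨fun hptx => ht0 (hp (by rw [hptx, hp0])),
           fun hpty => ht1 (hp (by rw [hpty, hp1]))⟩
  have hfne : ∀ t : unitInterval, t ≠ 0 → t ≠ 1 → f t ≠ t := by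
    intro t ht0 ht1 hft
    exact hmove (p t) (hmem t ht0 ht1) (by rw [← hfp, hft])
  have hint : ∀ t : unitInterval, t ≠ 0 → t ≠ 1 → t ∈ Ioo (0 : unitInterval) 1 := by
    intro t ht0 ht1
    exact ⟨lt_of_le_of_ne unitInterval.nonneg' (Ne.symm ht0),
           lt_of_le_of_ne unitInterval.le_one' ht1⟩
  have hfint : ∀ t : unitInterval, t ∈ Ioo (0 : unitInterval) 1 →
      f t ∈ Ioo (0 : unitInterval) 1 := by
    intro t ht
    have ht0 : t ≠ 0 := ne_of_gt ht.1
    have ht1 : t ≠ 1 := ne_of_lt ht.2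
    apply hint
    · intro hh; exact ht0 (hfinj (by rw [hh, hf0]))
    · intro hh; exact ht1 (hfinj (by rw [hh, hf1]))
  -- sign dichotomy on the open interval
  have hcoe0 : ((0 : unitInterval) : ℝ) = 0 := rfl
  have hcoe1 : ((1 : unitInterval) : ℝ) = 1 := rfl
  have hltiff : ∀ a b : unitInterval, a < b ↔ (a : ℝ) < (b : ℝ) :=
    fun a b => Subtype.coe_lt_coe.symm
  have hprec : IsPreconnected (Ioo (0 : unitInterval) 1) := by
    have h1 : IsPreconnected (Ioo (0 : ℝ) 1) := isPreconnected_Ioo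
    have h2 := h1.image (projIcc (0:ℝ) 1 zero_le_one) continuous_projIcc.continuousOn
    have h3 : projIcc (0:ℝ) 1 zero_le_one '' Ioo 0 1 = Ioo (0 : unitInterval) 1 := by
      ext t
      simp only [mem_image, mem_Ioo]
      constructor
      · rintro ⟨r, ⟨hr0, hr1⟩, rfl⟩
        have hrmem : r ∈ Icc (0:ℝ) 1 := ⟨le_of_lt hr0, le_of_lt hr1⟩
        rw [projIcc_of_mem _ hrmem]
        constructor
        · rw [hltiff]; exact hr0
        · rw [hltiff]; exact hr1
      · rintro ⟨ht0, ht1⟩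
        rw [hltiff] at ht0 ht1
        rw [hcoe0] at ht0; rw [hcoe1] at ht1
        exact ⟨(t : ℝ), ⟨ht0, ht1⟩, by rw [projIcc_of_mem _ t.2]⟩
    rw [h3] at h2
    exact h2
  have hdich : (∀ t ∈ Ioo (0 : unitInterval) 1, t < f t) ∨
      (∀ t ∈ Ioo (0 : unitInterval) 1, f t < t) := by
    by_contra hcon
    push_neg at hcon
    obtain ⟨⟨a, ha, hfa⟩, ⟨b, hb, hfb⟩⟩ := hcon
    obtain ⟨c, hc, hfc'⟩ := hprec.intermediate_value₂ ha hb
      (Continuous.continuousOn (continuous_subtype_val.comp hfc))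
      (Continuous.continuousOn continuous_subtype_val)
      (Subtype.coe_le_coe.mpr hfa) (Subtype.coe_le_coe.mpr hfb)
    exact hfne c (ne_of_gt hc.1) (ne_of_lt hc.2) (Subtype.ext hfc')
  -- z lies on the open arc
  obtain ⟨hz_arc, hz_ends⟩ := hz
  rw [hA] at hz_arc
  obtain ⟨t0, rfl⟩ := hz_arc
  simp only [mem_insert_iff, mem_singleton_iff] at hz_ends
  push_neg at hz_ends
  have ht00 : t0 ≠ 0 := fun hh => hz_ends.1 (by rw [hh, hp0])
  have ht01 : t0 ≠ 1 := fun hh => hz_ends.2 (by rw [hh, hp1])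
  have ht0mem : t0 ∈ Ioo (0 : unitInterval) 1 := hint t0 ht00 ht01
  -- iterates of f correspond to iterates of g
  have hiter : ∀ k : ℕ, p (f^[k] t0) = g^[k] (p t0) := by
    intro k
    induction k with
    | zero => rfl
    | succ m ih =>
      rw [Function.iterate_succ_apply', Function.iterate_succ_apply', hfp, ih]
  have hfixt : f^[n] t0 = t0 := by
    apply hp
    rw [hiter, ← homeo_pow_apply]
    exact hfix
  -- iterates stay in the interior and move monotonically
  have hgrow : ∀ (rel : unitInterval → unitInterval → Prop)
      (hrel : ∀ t ∈ Ioo (0 : unitInterval) 1, rel t (f t))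
      (htrans : ∀ {a b c : unitInterval}, rel a b → rel b c → rel a c)
      (hirr : ∀ {a : unitInterval}, ¬ rel a a),
      False := by
    intro rel hrel htrans hirr
    have key : ∀ k : ℕ, f^[k + 1] t0 ∈ Ioo (0 : unitInterval) 1 ∧ rel t0 (f^[k + 1] t0) := by
      intro k
      induction k with
      | zero =>
        exact ⟨hfint t0 ht0mem, by simpa using hrel t0 ht0mem⟩
      | succ m ih =>
        obtain ⟨ihmem, ihrel⟩ := ih
        rw [Function.iterate_succ_apply']
        exact ⟨hfint _ ihmem, htrans ihrel (hrel _ ihmem)⟩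
    obtain ⟨m, rfl⟩ : ∃ m, n = m + 1 := ⟨n - 1, (Nat.succ_pred_eq_of_pos hn).symm⟩
    have := (key m).2
    rw [hfixt] at this
    exact hirr this
  rcases hdich with hpos | hneg
  · exact hgrow (· < ·) hpos (fun hab hbc => lt_trans hab hbc) (lt_irrefl _)
  · exact hgrow (fun a b => b < a) hneg (fun hab hbc => lt_trans hbc hab) (lt_irrefl _)

end Core

/-- For `n ≥ 1`, `D(g) ⊆ D(gⁿ)` and `K(gⁿ) ⊆ K(g)`. -/
theorem Dset_subset_Dset_pow {X : Type*} [TopologicalSpace X] [Dendrite X]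
    (g : X ≃ₜ X) (n : ℕ) (hn : 1 ≤ n) :
    Dset g ⊆ Dset (g ^ n) ∧ Kset (g ^ n) ⊆ Kset g := by
  have hsub : Dset g ⊆ Dset (g ^ n) := by
    intro w hw
    simp only [Dset, mem_iUnion] at hw ⊢
    obtain ⟨x, y, hxy, hw⟩ := hw
    exact ⟨x, y, isAustroBoreal_pow hxy hn, hw⟩
  exact ⟨hsub, compl_subset_compl.mpr hsub⟩
end
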